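/- Let g : ℝⁿ → ℝⁿ be continuous and consider the discrete-time system x⁺ = g(x). Suppose: (i) Mₑ ⊆ ℝⁿ is closed and forward invariant (g(Mₑ) ⊆ Mₑ); (ii) Mᵢ ⊆ Mₑ is closed, stable relative to Mₑ, and locally attractive relative to Mₑ (there exists δ₁ > 0 such that every x ∈ Mₑ with dist(x, Mᵢ) < δ₁ satisfies dist(g^[n](x), Mᵢ) → 0); (iii) M∘ ⊆ Mᵢ is compact, stable relative to Mᵢ, and locally attractive relative to Mᵢ (there exists δ₂ > 0 such that every x ∈ Mᵢ with dist(x, M∘) < δ₂ satisfies dist(g^[n](x), M∘) → 0). Then M∘ is asymptotically stable relative to Mₑ: M∘ is stable relative to Mₑ, and there exists δ > 0 such that every x ∈ Mₑ with dist(x, M∘) < δ satisfies dist(g^[n](x), M∘) → 0 as n → ∞. -/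

import Mathlib

open Metric Filter Topology

/-- `X` is stable relative to `Y` for the discrete-time system `x⁺ = g x`. -/
def StableRel {d : ℕ} (g : EuclideanSpace ℝ (Fin d) → EuclideanSpace ℝ (Fin d))
    (Y X : Set (EuclideanSpace ℝ (Fin d))) : Prop :=
  ∀ ε > (0 : ℝ), ∀ Δ > (0 : ℝ), ∃ δ > (0 : ℝ), ∀ x ∈ Y,
    infDist x X < δ → ‖x‖ < Δ → ∀ n : ℕ, infDist (g^[n] x) X < ε

/-- Key contradiction lemma: there is no "backward chain limit" staying in a compact set,
approaching `Mi`, at distance `≥ r` from `Mo` at time 0 but within `ε < δ₂` afterwards. -/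
lemma master_chain_contradiction {d : ℕ} {g : EuclideanSpace ℝ (Fin d) → EuclideanSpace ℝ (Fin d)}
    (hg : Continuous g) {Mi Mo : Set (EuclideanSpace ℝ (Fin d))}
    (hMiClosed : IsClosed Mi) (hMoSub : Mo ⊆ Mi) (hMoNe : Mo.Nonempty)
    (hMoStable : StableRel g Mi Mo) {δ₂ : ℝ}
    (hAttr : ∀ x ∈ Mi, infDist x Mo < δ₂ →
      Tendsto (fun n : ℕ => infDist (g^[n] x) Mo) atTop (𝓝 0))
    {C : Set (EuclideanSpace ℝ (Fin d))} (hC : IsCompact C)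
    {F : ℕ → ℕ → EuclideanSpace ℝ (Fin d)} (hFC : ∀ k j, F k j ∈ C)
    (hchain : ∀ j : ℕ, ∀ᶠ k in atTop, g (F k (j+1)) = F k j)
    (hMi : ∀ j : ℕ, ∀ η > (0:ℝ), ∀ᶠ k in atTop, infDist (F k j) Mi < η)
    {ε r : ℝ} (hr : 0 < r) (hε : ε < δ₂)
    (hup : ∀ k j, 1 ≤ j → infDist (F k j) Mo ≤ ε)
    (hlow : ∀ k, r ≤ infDist (F k 0) Mo) : False := by
  have hMiNe : Mi.Nonempty := hMoNe.mono hMoSub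
  -- a norm bound on C
  obtain ⟨R, hR⟩ := isBounded_iff_forall_norm_le.1 hC.isBounded
  set Δ' : ℝ := max R 0 + 1 with hΔ'def
  have hΔ'pos : (0:ℝ) < Δ' := by positivity
  have hCnorm : ∀ z ∈ C, ‖z‖ < Δ' := fun z hz =>
    lt_of_le_of_lt (le_max_left _ _ |>.trans' (hR z hz)) (lt_add_one _)
  -- stability parameter
  obtain ⟨δ', hδ'pos, hδ'⟩ := hMoStable r hr Δ' hΔ'pos
  -- extract a pointwise convergent subsequence in the compact product
  have hS : IsCompact (Set.pi Set.univ (fun _ : ℕ => C)) := isCompact_univ_pi fun _ => hC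
  obtain ⟨w, hwS, ψ, hψ, hψlim⟩ := hS.tendsto_subseq
    (x := F) (fun k => by simp [Set.mem_pi]; exact fun j => hFC k j)
  have hψtop : Tendsto ψ atTop atTop := hψ.tendsto_atTop
  have hpt : ∀ j, Tendsto (fun k => F (ψ k) j) atTop (𝓝 (w j)) := by
    intro j; exact (tendsto_pi_nhds.1 hψlim) j
  have hwC : ∀ j, w j ∈ C := fun j => hwS j (Set.mem_univ j)
  -- the limit chain relation
  have hchainw : ∀ j, g (w (j+1)) = w j := by
    intro j
    have h1 : Tendsto (fun k => g (F (ψ k) (j+1))) atTop (𝓝 (g (w (j+1)))) :=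
      (hg.tendsto _).comp (hpt (j+1))
    have h2 : Tendsto (fun k => g (F (ψ k) (j+1))) atTop (𝓝 (w j)) :=
      (hpt j).congr' ((hψtop.eventually (hchain j)).mono fun k hk => hk.symm)
    exact tendsto_nhds_unique h1 h2
  -- chain points are in Mi
  have hwMi : ∀ j, w j ∈ Mi := by
    intro j
    have hinf : Tendsto (fun k => infDist (F (ψ k) j) Mi) atTop (𝓝 (infDist (w j) Mi)) :=
      ((continuous_infDist_pt Mi).tendsto _).comp (hpt j)
    have h0 : infDist (w j) Mi ≤ 0 := by
      refine le_of_forall_pos_le_add fun η hη => ?_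
      rw [zero_add]
      exact le_of_tendsto hinf ((hψtop.eventually (hMi j η hη)).mono fun k hk => hk.le)
    exact (hMiClosed.mem_iff_infDist_zero hMiNe).2 (le_antisymm h0 infDist_nonneg)
  -- distance bounds on the limit chain
  have hinfw : ∀ j, Tendsto (fun k => infDist (F (ψ k) j) Mo) atTop (𝓝 (infDist (w j) Mo)) :=
    fun j => ((continuous_infDist_pt Mo).tendsto _).comp (hpt j)
  have hupw : ∀ j, 1 ≤ j → infDist (w j) Mo ≤ ε := fun j hj =>
    le_of_tendsto (hinfw j) (Eventually.of_forall fun k => hup (ψ k) j hj)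
  have hloww0 : r ≤ infDist (w 0) Mo :=
    ge_of_tendsto (hinfw 0) (Eventually.of_forall fun k => hlow (ψ k))
  -- iterating the chain forward reaches w 0
  have hiter : ∀ j, g^[j] (w j) = w 0 := by
    intro j
    induction j with
    | zero => rfl
    | succ n ih => rw [Function.iterate_succ_apply, hchainw n, ih]
  -- lower bound along the chain
  have hloww : ∀ j, δ' ≤ infDist (w j) Mo := by
    intro j
    by_contra hcon
    push_neg at hcon
    have := hδ' (w j) (hwMi j) hcon (hCnorm _ (hwC j)) j
    rw [hiter j] at this
    exact absurd hloww0 (not_le.2 this)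
  -- take a limit point of the chain (shifted by one)
  set v : ℕ → EuclideanSpace ℝ (Fin d) := fun j => w (j+1) with hvdef
  have hchainv : ∀ j, g (v (j+1)) = v j := fun j => hchainw (j+1)
  have hshift : ∀ a b, g^[a] (v (b + a)) = v b := by
    intro a
    induction a with
    | zero => intro b; rfl
    | succ n ih =>
      intro b
      rw [Function.iterate_succ_apply]
      have : b + (n+1) = (b + n) + 1 := by omega
      rw [this, hchainv (b + n), ih b]
  obtain ⟨u, huC, θ, hθ, hθlim⟩ := hC.tendsto_subseq (x := v) (fun j => hwC (j+1))
  have hθtop : Tendsto θ atTop atTop := hθ.tendsto_atTop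
  have huMi : u ∈ Mi := hMiClosed.mem_of_tendsto hθlim
    (Eventually.of_forall fun j => hwMi (θ j + 1))
  have huMo : infDist u Mo ≤ ε :=
    le_of_tendsto (((continuous_infDist_pt Mo).tendsto _).comp hθlim)
      (Eventually.of_forall fun j => hupw (θ j + 1) (by omega))
  -- attractivity at u produces a point too close to Mo
  obtain ⟨N, hN⟩ := ((hAttr u huMi (lt_of_le_of_lt huMo hε)).eventually_lt_const
    hδ'pos).exists
  -- but g^[N] u is a limit of chain points, all at distance ≥ δ'
  have hlimN : Tendsto (fun i => g^[N] (v (θ i))) atTop (𝓝 (g^[N] u)) :=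
    ((hg.iterate N).tendsto _).comp hθlim
  have hev : ∀ᶠ i in atTop, g^[N] (v (θ i)) = v (θ i - N) := by
    filter_upwards [hθtop.eventually_ge_atTop N] with i hi
    have h1 : θ i = θ i - N + N := by omega
    conv_lhs => rw [h1]
    exact hshift N (θ i - N)
  have hge : δ' ≤ infDist (g^[N] u) Mo := by
    refine ge_of_tendsto (((continuous_infDist_pt Mo).tendsto _).comp hlimN) ?_
    filter_upwards [hev] with i hi
    simp only [Function.comp_apply, hi]
    exact hloww _
  exact absurd hN (not_lt.2 hge)

theorem hierarchical_local_asymptotic_stability_discrete {d : ℕ}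
    (g : EuclideanSpace ℝ (Fin d) → EuclideanSpace ℝ (Fin d)) (hg : Continuous g)
    (Me Mi Mo : Set (EuclideanSpace ℝ (Fin d)))
    (hMeClosed : IsClosed Me) (hMeInv : g '' Me ⊆ Me)
    (hMiSub : Mi ⊆ Me) (hMiClosed : IsClosed Mi)
    (hMiStable : StableRel g Me Mi)
    (hMiAttr : ∃ δ₁ > (0 : ℝ), ∀ x ∈ Me, infDist x Mi < δ₁ →
      Tendsto (fun n : ℕ => infDist (g^[n] x) Mi) atTop (𝓝 0))
    (hMoSub : Mo ⊆ Mi) (hMoCompact : IsCompact Mo)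
    (hMoStable : StableRel g Mi Mo)
    (hMoAttr : ∃ δ₂ > (0 : ℝ), ∀ x ∈ Mi, infDist x Mo < δ₂ →
      Tendsto (fun n : ℕ => infDist (g^[n] x) Mo) atTop (𝓝 0)) :
    StableRel g Me Mo ∧
      ∃ δ > (0 : ℝ), ∀ x ∈ Me, infDist x Mo < δ →
        Tendsto (fun n : ℕ => infDist (g^[n] x) Mo) atTop (𝓝 0) := by
  classical
  -- trivial case: Mo empty
  rcases Set.eq_empty_or_nonempty Mo with hMoE | hMoNe
  · subst hMoE
    constructor
    · intro ε hε Δ hΔ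
      exact ⟨1, one_pos, fun x _ _ _ n => by simpa [infDist_empty] using hε⟩
    · exact ⟨1, one_pos, fun x _ _ => by simpa [infDist_empty] using tendsto_const_nhds⟩
  obtain ⟨δ₁, hδ₁pos, hδ₁⟩ := hMiAttr
  obtain ⟨δ₂, hδ₂pos, hδ₂⟩ := hMoAttr
  -- orbits stay in Me
  have horbit : ∀ x ∈ Me, ∀ n : ℕ, g^[n] x ∈ Me := by
    intro x hx n
    induction n with
    | zero => exact hx
    | succ n ih => rw [Function.iterate_succ_apply']; exact hMeInv ⟨_, ih, rfl⟩
  -- points of Mo have orbits at distance 0 from Mo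
  have hMoInv : ∀ x ∈ Mo, ∀ n : ℕ, infDist (g^[n] x) Mo = 0 := by
    intro x hx n
    refine le_antisymm ?_ infDist_nonneg
    refine le_of_forall_pos_le_add fun ε hε => ?_
    rw [zero_add]
    obtain ⟨δ, hδpos, hδ⟩ := hMoStable ε hε (‖x‖ + 1) (by positivity)
    exact (hδ x (hMoSub hx) (by rw [infDist_zero_of_mem hx]; exact hδpos)
      (lt_add_one _) n).le
  -- monotonicity of infDist
  have hmono : ∀ z, infDist z Mi ≤ infDist z Mo :=
    fun z => infDist_le_infDist_of_subset hMoSub hMoNe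
  -- Part 1: stability of Mo relative to Me
  have hstab : StableRel g Me Mo := by
    intro ε hεpos Δ hΔpos
    set ε' : ℝ := min ε (δ₂ / 2) with hε'def
    have hε'pos : 0 < ε' := lt_min hεpos (by positivity)
    have hε'lt : ε' < δ₂ := lt_of_le_of_lt (min_le_right _ _) (by linarith)
    have hε'le : ε' ≤ ε := min_le_left _ _
    by_contra hcon
    push_neg at hcon
    -- extract counterexample sequences
    have hex : ∀ k : ℕ, ∃ x ∈ Me, infDist x Mo < min (1 / (k + 1 : ℝ)) ε' ∧ ‖x‖ < Δ ∧
        ∃ n : ℕ, ε' ≤ infDist (g^[n] x) Mo := by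
      intro k
      obtain ⟨x, hxMe, hx1, hx2, n, hn⟩ := hcon (min (1 / (k + 1 : ℝ)) ε')
        (lt_min (by positivity) hε'pos)
      exact ⟨x, hxMe, hx1, hx2, n, le_trans hε'le hn⟩
    choose x hxMe hx1 hx2 n hn using hex
    -- first exit times
    have hexm : ∀ k, ∃ j : ℕ, ε' ≤ infDist (g^[j] (x k)) Mo := fun k => ⟨n k, hn k⟩
    set m : ℕ → ℕ := fun k => Nat.find (hexm k) with hmdef
    have hm1 : ∀ k, ε' ≤ infDist (g^[m k] (x k)) Mo := fun k => Nat.find_spec (hexm k)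
    have hm2 : ∀ k, ∀ j < m k, infDist (g^[j] (x k)) Mo < ε' := fun k j hj =>
      not_le.1 (Nat.find_min (hexm k) hj)
    have hmpos : ∀ k, 1 ≤ m k := by
      intro k
      rcases Nat.eq_zero_or_pos (m k) with h0 | h
      · exfalso
        have := hm1 k
        rw [h0] at this
        exact absurd (lt_of_lt_of_le (hx1 k) (min_le_right _ _))
          (not_lt.2 (this.trans_eq rfl))
      · exact h
    -- the exit times tend to infinity
    have hmtop : Tendsto m atTop atTop := by
      rw [Filter.tendsto_atTop]
      intro N
      set U : Set (EuclideanSpace ℝ (Fin d)) :=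
        ⋂ i ∈ Finset.range (N + 1), {z | infDist (g^[i] z) Mo < ε'} with hUdef
      have hUopen : IsOpen U := by
        refine isOpen_biInter_finset fun i _ => ?_
        exact isOpen_lt ((continuous_infDist_pt Mo).comp (hg.iterate i)) continuous_const
      have hMoU : Mo ⊆ U := by
        intro z hz
        rw [hUdef]
        simp only [Set.mem_iInter, Set.mem_setOf_eq]
        intro i _
        rw [hMoInv z hz i]
        exact hε'pos
      obtain ⟨ρ, hρpos, hρ⟩ := hMoCompact.exists_thickening_subset_open hUopen hMoU
      have h1k : Tendsto (fun k : ℕ => 1 / (k + 1 : ℝ)) atTop (𝓝 0) :=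
        tendsto_one_div_add_atTop_nhds_zero_nat
      filter_upwards [h1k.eventually_lt_const hρpos] with k hk
      by_contra hNk
      push_neg at hNk
      have hxU : x k ∈ U := by
        refine hρ ?_
        rw [mem_thickening_iff_infDist_lt hMoNe]
        exact lt_of_lt_of_le (hx1 k) ((min_le_left _ _).trans hk.le)
      have : infDist (g^[m k] (x k)) Mo < ε' := by
        have := hxU
        rw [hUdef] at this
        simp only [Set.mem_iInter, Set.mem_setOf_eq, Finset.mem_range] at this
        exact this (m k) (by omega)
      exact absurd (hm1 k) (not_le.2 this)
    -- build the chains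
    set F : ℕ → ℕ → EuclideanSpace ℝ (Fin d) := fun k j => g^[m k - j] (x k) with hFdef
    set C : Set (EuclideanSpace ℝ (Fin d)) :=
      cthickening ε' Mo ∪ g '' cthickening ε' Mo with hCdef
    have hCcompact : IsCompact C := hMoCompact.cthickening.union
      (hMoCompact.cthickening.image hg)
    have hFup : ∀ k j, 1 ≤ j → infDist (F k j) Mo < ε' := by
      intro k j hj
      exact hm2 k (m k - j) (Nat.sub_lt (hmpos k) hj)
    have hFct : ∀ k j, 1 ≤ j → F k j ∈ cthickening ε' Mo := by
      intro k j hj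
      exact thickening_subset_cthickening _ _
        ((mem_thickening_iff_infDist_lt hMoNe).2 (hFup k j hj))
    have hF0 : ∀ k, F k 0 = g (F k 1) := by
      intro k
      have h1 : m k - 0 = (m k - 1) + 1 := by have := hmpos k; omega
      rw [hFdef]
      simp only
      rw [h1, Function.iterate_succ_apply']
    have hFC : ∀ k j, F k j ∈ C := by
      intro k j
      rcases Nat.eq_zero_or_pos j with h0 | h
      · subst h0
        rw [hF0 k]
        exact Or.inr ⟨F k 1, hFct k 1 le_rfl, rfl⟩
      · exact Or.inl (hFct k j h)
    have hchain : ∀ j : ℕ, ∀ᶠ k in atTop, g (F k (j+1)) = F k j := by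
      intro j
      filter_upwards [hmtop.eventually_ge_atTop (j + 1)] with k hk
      have h1 : m k - j = (m k - (j + 1)) + 1 := by omega
      rw [hFdef]
      simp only
      rw [h1, Function.iterate_succ_apply']
    have hMiF : ∀ j : ℕ, ∀ η > (0:ℝ), ∀ᶠ k in atTop, infDist (F k j) Mi < η := by
      intro j η hη
      obtain ⟨δη, hδηpos, hδη⟩ := hMiStable η hη Δ hΔpos
      have h1k : Tendsto (fun k : ℕ => 1 / (k + 1 : ℝ)) atTop (𝓝 0) :=
        tendsto_one_div_add_atTop_nhds_zero_nat
      filter_upwards [h1k.eventually_lt_const hδηpos] with k hk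
      refine hδη (x k) (hxMe k) ?_ (hx2 k) (m k - j)
      exact lt_of_le_of_lt (hmono (x k))
        (lt_of_lt_of_le (hx1 k) ((min_le_left _ _).trans hk.le))
    have hlow : ∀ k, ε' ≤ infDist (F k 0) Mo := by
      intro k
      have : m k - 0 = m k := by omega
      rw [hFdef]
      simp only [this]
      exact hm1 k
    exact master_chain_contradiction hg hMiClosed hMoSub hMoNe hMoStable hδ₂
      hCcompact hFC hchain hMiF hε'pos hε'lt
      (fun k j hj => (hFup k j hj).le) hlow
  refine ⟨hstab, ?_⟩
  -- Part 2: local attractivity relative to Me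
  obtain ⟨R, hR⟩ := isBounded_iff_forall_norm_le.1 hMoCompact.isBounded
  set R' : ℝ := max R 0 with hR'def
  set ε₀ : ℝ := δ₂ / 2 with hε₀def
  have hε₀pos : 0 < ε₀ := by positivity
  have hε₀lt : ε₀ < δ₂ := by rw [hε₀def]; linarith
  obtain ⟨δ₀, hδ₀pos, hδ₀⟩ := hstab ε₀ hε₀pos (R' + 2) (by positivity)
  set δ : ℝ := min δ₀ (min δ₁ (min ε₀ 1)) with hδdef
  have hδpos : 0 < δ := lt_min hδ₀pos (lt_min hδ₁pos (lt_min hε₀pos one_pos))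
  refine ⟨δ, hδpos, fun x hxMe hxo => ?_⟩
  have hδle1 : δ ≤ 1 := (min_le_right _ _).trans ((min_le_right _ _).trans (min_le_right _ _))
  have hδleε₀ : δ ≤ ε₀ := (min_le_right _ _).trans ((min_le_right _ _).trans (min_le_left _ _))
  have hδleδ₁ : δ ≤ δ₁ := (min_le_right _ _).trans (min_le_left _ _)
  have hδleδ₀ : δ ≤ δ₀ := min_le_left _ _
  -- x is bounded
  have hxnorm : ‖x‖ < R' + 2 := by
    obtain ⟨z, hzMo, hz⟩ := (infDist_lt_iff hMoNe).1 hxo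
    have h1 : ‖x‖ ≤ ‖z‖ + dist x z := by
      rw [dist_eq_norm]; exact norm_le_insert' x z
    have h2 : ‖z‖ ≤ R' := (hR z hzMo).trans (le_max_left _ _)
    have h3 : δ ≤ 1 := (min_le_right _ _).trans ((min_le_right _ _).trans (min_le_right _ _))
    linarith
  -- the orbit stays ε₀-close to Mo
  have horbclose : ∀ n : ℕ, infDist (g^[n] x) Mo < ε₀ :=
    hδ₀ x hxMe (lt_of_lt_of_le hxo hδleδ₀) hxnorm
  -- the orbit converges to Mi
  have horbMi : Tendsto (fun n : ℕ => infDist (g^[n] x) Mi) atTop (𝓝 0) :=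
    hδ₁ x hxMe (lt_of_le_of_lt (hmono x) (lt_of_lt_of_le hxo hδleδ₁))
  by_contra hT
  -- get a positive gap occurring frequently
  have hfreq : ∃ r > (0:ℝ), ∃ᶠ n in atTop, r ≤ infDist (g^[n] x) Mo := by
    rw [NormedAddCommGroup.tendsto_nhds_zero] at hT
    push_neg at hT
    obtain ⟨r, hrpos, hr⟩ := hT
    refine ⟨r, hrpos, hr.mono fun n hn => ?_⟩
    calc r ≤ ‖infDist (g^[n] x) Mo‖ := hn
      _ = infDist (g^[n] x) Mo := Real.norm_of_nonneg infDist_nonneg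
  obtain ⟨r, hrpos, hr⟩ := hfreq
  set r' : ℝ := min r ε₀ with hr'def
  have hr'pos : 0 < r' := lt_min hrpos hε₀pos
  have hr'freq : ∃ᶠ n in atTop, r' ≤ infDist (g^[n] x) Mo :=
    hr.mono fun n hn => (min_le_left _ _).trans hn
  obtain ⟨φ, hφ, hφr⟩ := extraction_of_frequently_atTop hr'freq
  -- build the chains
  set F : ℕ → ℕ → EuclideanSpace ℝ (Fin d) := fun k j => g^[φ k - j] x with hFdef
  set C : Set (EuclideanSpace ℝ (Fin d)) := cthickening ε₀ Mo with hCdef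
  have hCcompact : IsCompact C := hMoCompact.cthickening
  have hFclose : ∀ k j, infDist (F k j) Mo < ε₀ := fun k j => horbclose _
  have hFC : ∀ k j, F k j ∈ C :=
    fun k j => thickening_subset_cthickening _ _
      ((mem_thickening_iff_infDist_lt hMoNe).2 (hFclose k j))
  have hφtop : Tendsto φ atTop atTop := hφ.tendsto_atTop
  have hchain : ∀ j : ℕ, ∀ᶠ k in atTop, g (F k (j+1)) = F k j := by
    intro j
    filter_upwards [hφtop.eventually_ge_atTop (j + 1)] with k hk
    have h1 : φ k - j = (φ k - (j + 1)) + 1 := by omega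
    rw [hFdef]
    simp only
    rw [h1, Function.iterate_succ_apply']
  have hsubtop : ∀ j : ℕ, Tendsto (fun k => φ k - j) atTop atTop := by
    intro j
    rw [Filter.tendsto_atTop]
    intro b
    filter_upwards [hφtop.eventually_ge_atTop (b + j)] with k hk
    omega
  have hMiF : ∀ j : ℕ, ∀ η > (0:ℝ), ∀ᶠ k in atTop, infDist (F k j) Mi < η := by
    intro j η hη
    have hev : ∀ᶠ n : ℕ in atTop, infDist (g^[n] x) Mi < η :=
      horbMi.eventually_lt_const hη
    exact (hsubtop j).eventually hev
  have hlow : ∀ k, r' ≤ infDist (F k 0) Mo := by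
    intro k
    have h0 : φ k - 0 = φ k := by omega
    rw [hFdef]
    simp only [h0]
    exact hφr k
  exact master_chain_contradiction hg hMiClosed hMoSub hMoNe hMoStable hδ₂
    hCcompact hFC hchain hMiF hr'pos hε₀lt
    (fun k j _ => (hFclose k j).le) hlow
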